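/- arXiv:2310.00990 — 4 statements merged into one kernel-verified Lean document; each statement's English description precedes it below -/
import Mathlib

section
/- Let G be a TSO game of group I, i.e. one player X is permitted to update buffer messages after her own moves and the opposing player Y is permitted to update before her own moves (each possibly also at additional times). Suppose σ_X is a positional winning strategy for player X from a configuration c_0. Then the positional strategy σ̄_X defined by σ̄_X(c) = \overline{σ_X(c)} (play σ_X's move and then flush all buffers, using X's right to update after her move) is also a winning strategy for player X from c_0. -/
namespace TSOGames

/-- The data of a (safety) game: a partition of the configurations into those of
player A (`isA`) and those of player B, a transition relation, and final configurations. -/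
structure SGame (C : Type*) where
  isA : C → Prop
  step : C → C → Prop
  final : C → Prop

namespace SGame

variable {C : Type*} (G : SGame C)

/-- The transition relation alternates between the two players' configurations. -/
def Alternating : Prop := ∀ c c', G.step c c' → (G.isA c ↔ ¬ G.isA c')

/-- Every configuration has at least one successor. -/
def DeadlockFree : Prop := ∀ c, ∃ c', G.step c c'

/-- Final configurations belong to player A. -/
def FinalInA : Prop := ∀ c, G.final c → G.isA c

/-- An (infinite) play: consecutive configurations are related by `step`. -/
def IsPlay (ρ : ℕ → C) : Prop := ∀ i, G.step (ρ i) (ρ (i + 1))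

/-- A (history-dependent) strategy `σ`, given the strict history and the current
configuration, chooses a successor; it is valid for the player owning the
configurations satisfying `own` if it always chooses an actual successor. -/
def ValidStrat (own : C → Prop) (σ : List C → C → C) : Prop :=
  ∀ h c, own c → G.step c (σ h c)

/-- A play is consistent with the strategy `σ` of the player owning the
configurations satisfying `own` if at every such configuration the play follows `σ`. -/
def Consistent (own : C → Prop) (σ : List C → C → C) (ρ : ℕ → C) : Prop :=
  ∀ i, own (ρ i) → ρ (i + 1) = σ (List.ofFn fun j : Fin i => ρ j) (ρ i)

/-- A play is winning for player B if it visits a final configuration. -/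
def BWins (ρ : ℕ → C) : Prop := ∃ i, G.final (ρ i)

/-- A play is winning for player A if it never visits a final configuration. -/
def AWinsPlay (ρ : ℕ → C) : Prop := ¬ G.BWins ρ

/-- `σ` is a winning strategy from `c0` for the player owning the configurations
satisfying `own`, whose plays are winning when they satisfy `winPlay`:
it is valid and every play from `c0` consistent with it is winning. -/
def WinningStrat (own : C → Prop) (winPlay : (ℕ → C) → Prop)
    (σ : List C → C → C) (c0 : C) : Prop :=
  G.ValidStrat own σ ∧
    ∀ ρ : ℕ → C, ρ 0 = c0 → G.IsPlay ρ → Consistent own σ ρ → winPlay ρ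

/-- The given player has a winning strategy from `c0`. -/
def Wins (own : C → Prop) (winPlay : (ℕ → C) → Prop) (c0 : C) : Prop :=
  ∃ σ, G.WinningStrat own winPlay σ c0

/-- `c0` is winning for player A. -/
def WinA (c0 : C) : Prop := G.Wins (fun c => G.isA c) G.AWinsPlay c0

/-- `c0` is winning for player B. -/
def WinB (c0 : C) : Prop := G.Wins (fun c => ¬ G.isA c) G.BWins c0

end SGame

/-- Restriction of a game to a subset `D` of its configurations. -/
def restrictGame {C : Type*} (G : SGame C) (D : Set C) : SGame C where
  isA := G.isA
  step := fun c c' => G.step c c' ∧ c ∈ D ∧ c' ∈ D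
  final := fun c => G.final c ∧ c ∈ D

/-- The winning condition on plays for the player encoded by `b` (`true` = player A,
who wins a play iff it avoids the final configurations; `false` = player B). -/
def winPlayOf {C : Type*} (G : SGame C) (b : Bool) : (ℕ → C) → Prop :=
  fun ρ => if b then ¬ G.BWins ρ else G.BWins ρ

end TSOGames
namespace TSOGames

/-- TSO instructions: read, write, skip, and memory fence. -/
inductive Instr (X V : Type*) : Type _
  | read (x : X) (v : V)
  | write (x : X) (v : V)
  | skip
  | fence

/-- Whether an instruction is a read instruction. -/
def Instr.isRead {X V : Type*} : Instr X V → Bool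
  | .read _ _ => true
  | _ => false

/-- A concurrent program: a family of processes indexed by `I`, each a transition
system over local states `S` labeled by instructions over variables `X` and values `V`. -/
structure Program (I S X V : Type*) where
  delta : I → S → Instr X V → S → Prop

/-- A TSO configuration: local states, per-process FIFO store buffers
(newest message at the head, oldest at the end), and the shared memory. -/
structure Conf (I S X V : Type*) where
  st : I → S
  buf : I → List (X × V)
  mem : X → V

section TSO

variable {I S X V : Type*}

/-- The value of the most recent buffered write on `x`, if any
(the buffer stores the newest message first). -/
def bufVal [DecidableEq X] : List (X × V) → X → Option V
  | [], _ => none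
  | (y, v) :: rest, x => if y = x then some v else bufVal rest x

/-- The value process `ι` reads from variable `x`: the most recent buffered write of
`ι` on `x` if there is one, and the memory value otherwise. -/
def readVal [DecidableEq X] (c : Conf I S X V) (ι : I) (x : X) : V :=
  (bufVal (c.buf ι) x).getD (c.mem x)

variable [DecidableEq I] [DecidableEq X]

/-- Execution of one instruction by process `ι` under TSO semantics. -/
inductive InstrStep (P : Program I S X V) (ι : I) (instr : Instr X V) :
    Conf I S X V → Conf I S X V → Prop
  | read (c : Conf I S X V) (x : X) (v : V) (s' : S) :
      instr = Instr.read x v → P.delta ι (c.st ι) (Instr.read x v) s' →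
      readVal c ι x = v →
      InstrStep P ι instr c ⟨Function.update c.st ι s', c.buf, c.mem⟩
  | write (c : Conf I S X V) (x : X) (v : V) (s' : S) :
      instr = Instr.write x v → P.delta ι (c.st ι) (Instr.write x v) s' →
      InstrStep P ι instr c
        ⟨Function.update c.st ι s', Function.update c.buf ι ((x, v) :: c.buf ι), c.mem⟩
  | skip (c : Conf I S X V) (s' : S) :
      instr = Instr.skip → P.delta ι (c.st ι) Instr.skip s' →
      InstrStep P ι instr c ⟨Function.update c.st ι s', c.buf, c.mem⟩
  | fence (c : Conf I S X V) (s' : S) :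
      instr = Instr.fence → P.delta ι (c.st ι) Instr.fence s' → c.buf ι = [] →
      InstrStep P ι instr c ⟨Function.update c.st ι s', c.buf, c.mem⟩

/-- An update step: the oldest buffered message of some process is committed to memory. -/
inductive UpdStep : Conf I S X V → Conf I S X V → Prop
  | mk (c : Conf I S X V) (ι : I) (x : X) (v : V) (w : List (X × V)) :
      c.buf ι = w ++ [(x, v)] →
      UpdStep c ⟨c.st, Function.update c.buf ι w, Function.update c.mem x v⟩

/-- Finitely many update steps. -/
def Upds : Conf I S X V → Conf I S X V → Prop := Relation.ReflTransGen UpdStep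

/-- `flush` maps every configuration `c` to the configuration `c̄` obtained by
updating all buffered messages to the memory: `c →up* c̄` and all buffers of `c̄` are empty. -/
def IsFlush (flush : Conf I S X V → Conf I S X V) : Prop :=
  ∀ c, Upds c (flush c) ∧ ∀ ι, (flush c).buf ι = []

/-- Update steps by a player, if she is allowed to perform them (otherwise nothing happens). -/
def OptUpds (allowed : Bool) (c c' : Conf I S X V) : Prop :=
  if allowed then Upds c c' else c' = c

/-- A move of a player whose permissions to update before resp. after her move are
given by `perm`: optional updates before, one instruction, optional updates after. -/
def Move (P : Program I S X V) (perm : Bool × Bool) (c c' : Conf I S X V) : Prop :=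
  ∃ c1 c2, OptUpds perm.1 c c1 ∧ (∃ ι instr, InstrStep P ι instr c1 c2) ∧
    OptUpds perm.2 c2 c'

/-- The TSO game induced by a program `P`, update permissions
`permA`/`permB` = (may update before her move, may update after her move)
for players A and B, and a set `SF` of final local states. Game configurations are
TSO configurations annotated by `true` (player A's) or `false` (player B's). -/
def tsoGame (P : Program I S X V) (permA permB : Bool × Bool) (SF : Set S) :
    SGame (Conf I S X V × Bool) where
  isA := fun c => c.2 = true
  step := fun c c' =>
    (c.2 = true ∧ c'.2 = false ∧ Move P permA c.1 c'.1) ∨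
    (c.2 = false ∧ c'.2 = true ∧ Move P permB c.1 c'.1)
  final := fun c => c.2 = true ∧ ∃ ι, c.1.st ι ∈ SF

/-- The configurations owned by the player encoded by `b` (`true` = player A). -/
def ownOf (b : Bool) : Conf I S X V × Bool → Prop := fun c => c.2 = b

/-- The total number of buffered messages of a configuration. -/
def totalBuf [Fintype I] (c : Conf I S X V) : ℕ := ∑ ι, (c.buf ι).length

end TSO

end TSOGames
namespace TSOGames

private lemma updStep_st {I S X V : Type} [DecidableEq I] [DecidableEq X]
    {c c' : Conf I S X V} (h : UpdStep c c') : c'.st = c.st := by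
  cases h; rfl

private lemma upds_st {I S X V : Type} [DecidableEq I] [DecidableEq X]
    {c c' : Conf I S X V} (h : Upds c c') : c'.st = c.st := by
  induction h with
  | refl => rfl
  | tail _ h ih => rw [updStep_st h, ih]

private lemma move_flush' {I S X V : Type} [DecidableEq I] [DecidableEq X]
    {P : Program I S X V} {perm : Bool × Bool} (hp : perm.2 = true)
    {flush : Conf I S X V → Conf I S X V} (hf : IsFlush flush)
    {a b : Conf I S X V} (h : Move P perm a b) : Move P perm a (flush b) := by
  obtain ⟨c1, c2, h1, h2, h3⟩ := h
  refine ⟨c1, c2, h1, h2, ?_⟩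
  rw [hp] at h3 ⊢
  simp only [OptUpds, if_pos rfl] at h3 ⊢
  exact h3.trans (hf b).1

private lemma move_preflush {I S X V : Type} [DecidableEq I] [DecidableEq X]
    {P : Program I S X V} {perm : Bool × Bool} (hp : perm.1 = true)
    {flush : Conf I S X V → Conf I S X V} (hf : IsFlush flush)
    {a b : Conf I S X V} (h : Move P perm (flush a) b) : Move P perm a b := by
  obtain ⟨c1, c2, h1, h2, h3⟩ := h
  refine ⟨c1, c2, ?_, h2, h3⟩
  rw [hp] at h1 ⊢
  simp only [OptUpds, if_pos rfl] at h1 ⊢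
  exact (hf a).1.trans h1

/-- Group I: player X may update after her own moves (`permX.2 = true`), player Y may
update before her own moves (`permY.1 = true`), possibly also at additional times.
If `σX` is a positional winning strategy for player X from `c0`, then the positional
strategy that plays `σX`'s move and then flushes all buffers is also winning for X from `c0`. -/
theorem statement3 {I S X V : Type} [DecidableEq I] [DecidableEq X]
    (P : Program I S X V) (SF : Set S)
    (permX permY : Bool × Bool) (hX : permX.2 = true) (hY : permY.1 = true)
    (xIsA : Bool)
    (G : SGame (Conf I S X V × Bool))
    (hG : G = tsoGame P (if xIsA then permX else permY) (if xIsA then permY else permX) SF)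
    (flush : Conf I S X V → Conf I S X V) (hflush : IsFlush flush)
    (c0 : Conf I S X V × Bool)
    (σX : Conf I S X V × Bool → Conf I S X V × Bool)
    (hwin : G.WinningStrat (ownOf xIsA) (winPlayOf G xIsA) (fun _ c => σX c) c0) :
    G.WinningStrat (ownOf xIsA) (winPlayOf G xIsA)
      (fun _ c => (flush (σX c).1, (σX c).2)) c0 := by
  obtain ⟨hvalid, hplays⟩ := hwin
  have hflst : ∀ a : Conf I S X V, (flush a).st = a.st := fun a => upds_st (hflush a).1
  have hpermX : (if xIsA then permX else permY).2 = true ∨ xIsA = false := by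
    cases xIsA <;> simp [hX]
  -- the boolean component flips along every step
  have hstep2 : ∀ c c' : Conf I S X V × Bool, G.step c c' → c'.2 = !c.2 := by
    intro c c' h
    rw [hG] at h
    rcases h with ⟨h1, h2, _⟩ | ⟨h1, h2, _⟩ <;> simp [h1, h2]
  -- validity of the flushed strategy
  have hvalid' : G.ValidStrat (ownOf xIsA) (fun _ c => (flush (σX c).1, (σX c).2)) := by
    intro h c hc
    have hs := hvalid h c hc
    have hcb : c.2 = xIsA := hc
    rw [hG] at hs ⊢
    rcases hs with ⟨h1, h2, hm⟩ | ⟨h1, h2, hm⟩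
    · have hxa : xIsA = true := by rw [← hcb, h1]
      left
      refine ⟨h1, h2, move_flush' ?_ hflush hm⟩
      simp [hxa, hX]
    · have hxa : xIsA = false := by rw [← hcb, h1]
      right
      refine ⟨h1, h2, move_flush' ?_ hflush hm⟩
      simp [hxa, hX]
  refine ⟨hvalid', ?_⟩
  intro ρ h0 hplay hcons
  -- the shadow play following the original strategy
  set ρ' : ℕ → Conf I S X V × Bool := fun n =>
    match n with
    | 0 => ρ 0
    | (i+1) => if (ρ i).2 = xIsA then σX (ρ i) else ρ (i+1) with hρ'
  have hρ'0 : ρ' 0 = ρ 0 := rfl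
  have hρ'succ : ∀ i, ρ' (i+1) = if (ρ i).2 = xIsA then σX (ρ i) else ρ (i+1) :=
    fun i => rfl
  -- at X's positions, ρ follows the flushed strategy
  have hconsρ : ∀ i, (ρ i).2 = xIsA →
      ρ (i+1) = (flush (σX (ρ i)).1, (σX (ρ i)).2) := by
    intro i hi
    exact hcons i hi
  -- ρ' agrees with ρ on booleans and local states
  have hsame : ∀ i, (ρ' i).2 = (ρ i).2 ∧ (ρ' i).1.st = (ρ i).1.st := by
    intro i
    cases i with
    | zero => exact ⟨rfl, rfl⟩
    | succ j =>
      rw [hρ'succ]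
      by_cases hj : (ρ j).2 = xIsA
      · rw [if_pos hj, hconsρ j hj]
        exact ⟨rfl, (hflst _).symm⟩
      · rw [if_neg hj]
        exact ⟨rfl, rfl⟩
  -- at X's positions, ρ' coincides with ρ
  have hXeq : ∀ i, (ρ i).2 = xIsA → ρ' i = ρ i := by
    intro i hi
    cases i with
    | zero => rfl
    | succ j =>
      have hflip := hstep2 _ _ (hplay j)
      have hj : ¬ (ρ j).2 = xIsA := by
        intro hj
        rw [hj] at hflip
        rw [hflip] at hi
        cases xIsA <;> simp_all
      rw [hρ'succ, if_neg hj]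
  -- ρ' is a play
  have hplay' : G.IsPlay ρ' := by
    intro i
    by_cases hi : (ρ i).2 = xIsA
    · rw [hXeq i hi, hρ'succ, if_pos hi]
      exact hvalid [] (ρ i) hi
    · rw [hρ'succ, if_neg hi]
      cases i with
      | zero => exact hplay 0
      | succ j =>
        have hflip := hstep2 _ _ (hplay j)
        have hj : (ρ j).2 = xIsA := by
          by_contra hj
          rw [hflip] at hi
          cases xIsA <;> simp_all
        rw [hρ'succ, if_pos hj]
        have hcρ := hconsρ j hj
        have hstep := hplay (j+1)
        rw [hcρ] at hstep hi
        rw [hG] at hstep ⊢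
        rcases hstep with ⟨h1, h2, hm⟩ | ⟨h1, h2, hm⟩
        · -- the Y-move is an A-move, so xIsA = false and Y's perm is permY
          have h1' : (σX (ρ j)).2 = true := h1
          have hi' : ¬ (σX (ρ j)).2 = xIsA := hi
          have hxa : xIsA = false := by
            cases xIsA
            · rfl
            · exact absurd h1' hi'
          left
          refine ⟨h1', h2, ?_⟩
          have hperm : (if xIsA then permX else permY) = permY := by rw [hxa]; rfl
          rw [hperm] at hm ⊢
          exact move_preflush hY hflush hm
        · have h1' : (σX (ρ j)).2 = false := h1
          have hi' : ¬ (σX (ρ j)).2 = xIsA := hi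
          have hxa : xIsA = true := by
            cases xIsA
            · exact absurd h1' hi'
            · rfl
          right
          refine ⟨h1', h2, ?_⟩
          have hperm : (if xIsA then permY else permX) = permY := by rw [hxa]; rfl
          rw [hperm] at hm ⊢
          exact move_preflush hY hflush hm
  -- ρ' is consistent with the original strategy
  have hcons' : SGame.Consistent (ownOf xIsA) (fun _ c => σX c) ρ' := by
    intro i hi
    have hib : (ρ i).2 = xIsA := by rw [← (hsame i).1]; exact hi
    rw [hρ'succ, if_pos hib, hXeq i hib]
  have hwin' := hplays ρ' (hρ'0.trans h0) hplay' hcons'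
  -- final configurations agree between ρ and ρ'
  have hfinal : ∀ i, G.final (ρ i) ↔ G.final (ρ' i) := by
    intro i
    rw [hG]
    obtain ⟨hb, hs⟩ := hsame i
    constructor
    · rintro ⟨h1, ι, h2⟩
      exact ⟨by rw [hb, h1], ι, by rwa [hs]⟩
    · rintro ⟨h1, ι, h2⟩
      exact ⟨by rw [← hb, h1], ι, by rwa [← hs]⟩
  have hBW : G.BWins ρ ↔ G.BWins ρ' := by
    constructor
    · rintro ⟨i, h⟩; exact ⟨i, (hfinal i).1 h⟩
    · rintro ⟨i, h⟩; exact ⟨i, (hfinal i).2 h⟩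
  unfold winPlayOf at hwin' ⊢
  cases xIsA
  · simp only [if_neg Bool.false_ne_true] at hwin' ⊢
    exact hBW.2 hwin'
  · simp only [if_pos rfl] at hwin' ⊢
    exact fun h => hwin' (hBW.1 h)

end TSOGames
end

section
/- Let G be a TSO game of group I (player X updates after her moves, player Y updates before her moves), let c_0 be a configuration, and suppose σ_X is a positional winning strategy for player X from c_0; let σ̄_X(c) = \overline{σ_X(c)} be the flushed strategy. Let G' be the finite game whose Y-configurations are those Y-configurations of G holding at most one buffered message in total (together with c_0 if c_0 is a Y-configuration), whose X-configurations are the G-successors of these Y-configurations (together with c_0 if c_0 is an X-configuration), whose transition relation is the restriction of G's transition relation to these configurations, and whose final configurations are C_F intersected with its configurations. Then the restriction σ̄'_X of σ̄_X to the X-configurations of G' is a valid strategy for G' and is a winning strategy for player X from c_0 in G'. -/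
namespace TSOGames

variable {I S X V : Type*}

/-- The Y-configurations of the restricted group-I game: the Y-configurations of `G`
(the player encoded by `xIsA` is X) with at most one buffered message in total,
together with `c0` if `c0` is a Y-configuration. -/
def groupICY [Fintype I] (xIsA : Bool) (c0 : Conf I S X V × Bool) :
    Set (Conf I S X V × Bool) :=
  {c | c.2 = !xIsA ∧ totalBuf c.1 ≤ 1} ∪ {c | c = c0 ∧ c0.2 = !xIsA}

/-- The X-configurations of the restricted group-I game: the `G`-successors of its
Y-configurations, together with `c0` if `c0` is an X-configuration. -/
def groupICX [Fintype I] (G : SGame (Conf I S X V × Bool)) (xIsA : Bool)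
    (c0 : Conf I S X V × Bool) : Set (Conf I S X V × Bool) :=
  {c' | ∃ c ∈ groupICY xIsA c0, G.step c c'} ∪ {c | c = c0 ∧ c0.2 = xIsA}

end TSOGames
namespace TSOGames

section Helpers

variable {I S X V : Type*} [DecidableEq I] [DecidableEq X]

lemma UpdStep.st_eq {c c' : Conf I S X V} (h : UpdStep c c') : c'.st = c.st := by
  cases h; rfl

lemma Upds.st_eq' {c c' : Conf I S X V} (h : Upds c c') : c'.st = c.st := by
  induction h with
  | refl => rfl
  | tail _ h2 ih => rw [h2.st_eq, ih]

lemma move_extend_after {P : Program I S X V} {perm : Bool × Bool} (hp : perm.2 = true)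
    {a b b' : Conf I S X V} (h : Move P perm a b) (hu : Upds b b') : Move P perm a b' := by
  obtain ⟨c1, c2, h1, h2, h3⟩ := h
  refine ⟨c1, c2, h1, h2, ?_⟩
  simp only [OptUpds, hp, if_true] at h3 ⊢
  exact h3.trans hu

lemma move_extend_before {P : Program I S X V} {perm : Bool × Bool} (hp : perm.1 = true)
    {a a' b : Conf I S X V} (hu : Upds a' a) (h : Move P perm a b) : Move P perm a' b := by
  obtain ⟨c1, c2, h1, h2, h3⟩ := h
  refine ⟨c1, c2, ?_, h2, h3⟩
  simp only [OptUpds, hp, if_true] at h1 ⊢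
  exact hu.trans h1

end Helpers

/-- Group I, restriction to the finite game `G'`: the flushed winning strategy of
player X restricted to the X-configurations of `G'` is a valid strategy of `G'` and
is winning for player X from `c0` in `G'`. -/
theorem statement4 {I S X V : Type} [DecidableEq I] [DecidableEq X] [Fintype I]
    (P : Program I S X V) (SF : Set S)
    (permX permY : Bool × Bool) (hX : permX.2 = true) (hY : permY.1 = true)
    (xIsA : Bool)
    (G : SGame (Conf I S X V × Bool))
    (hG : G = tsoGame P (if xIsA then permX else permY) (if xIsA then permY else permX) SF)
    (flush : Conf I S X V → Conf I S X V) (hflush : IsFlush flush)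
    (c0 : Conf I S X V × Bool)
    (σX : Conf I S X V × Bool → Conf I S X V × Bool)
    (hwin : G.WinningStrat (ownOf xIsA) (winPlayOf G xIsA) (fun _ c => σX c) c0)
    (D : Set (Conf I S X V × Bool))
    (hD : D = groupICX G xIsA c0 ∪ groupICY xIsA c0)
    (G' : SGame (Conf I S X V × Bool)) (hG' : G' = restrictGame G D) :
    G'.WinningStrat (fun c => c.2 = xIsA ∧ c ∈ D) (winPlayOf G' xIsA)
      (fun _ c => (flush (σX c).1, (σX c).2)) c0 := by
  subst hG' hD hG
  obtain ⟨hvalid, hwinplay⟩ := hwin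
  set pe : Bool × Bool := if xIsA then permX else permY with hpe
  set pe' : Bool × Bool := if xIsA then permY else permX with hpe'
  set G := tsoGame P pe pe' SF with hGdef
  set D : Set (Conf I S X V × Bool) := groupICX G xIsA c0 ∪ groupICY xIsA c0 with hDdef
  -- ownership flip along steps
  have hflip : ∀ c c' : Conf I S X V × Bool, G.step c c' → c'.2 = !c.2 := by
    intro c c' h
    rcases h with ⟨h1, h2, _⟩ | ⟨h1, h2, _⟩ <;> simp [h1, h2]
  -- shape of an X step
  have hXstep : ∀ c c' : Conf I S X V × Bool, c.2 = xIsA → G.step c c' →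
      Move P permX c.1 c'.1 ∧ c'.2 = !xIsA := by
    intro c c' hc h
    rcases h with ⟨h1, h2, h3⟩ | ⟨h1, h2, h3⟩ <;> cases xIsA <;>
      simp_all [hpe, hpe']
  -- rebuilding an X step
  have hXstepBack : ∀ c c' : Conf I S X V × Bool, c.2 = xIsA → c'.2 = !xIsA →
      Move P permX c.1 c'.1 → G.step c c' := by
    intro c c' hc hc' hm
    cases xIsA
    · exact Or.inr ⟨hc, by simpa using hc', by simpa [hpe'] using hm⟩
    · exact Or.inl ⟨hc, by simpa using hc', by simpa [hpe] using hm⟩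
  -- Y can absorb preceding updates
  have hYabsorb : ∀ (a : Conf I S X V) (c c' : Conf I S X V × Bool), c.2 = !xIsA →
      Upds a c.1 → G.step c c' → G.step (a, c.2) c' := by
    intro a c c' hc hu h
    rcases h with ⟨h1, h2, h3⟩ | ⟨h1, h2, h3⟩ <;> cases xIsA
    · exact Or.inl ⟨h1, h2, move_extend_before (by simpa [hpe] using hY) hu h3⟩
    · simp at hc; simp [hc] at h1
    · simp at hc; simp [hc] at h1
    · exact Or.inr ⟨h1, h2, move_extend_before (by simpa [hpe'] using hY) hu h3⟩
  -- the flushed successor of an X configuration is a small Y configuration in D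
  have hsuccD : ∀ c : Conf I S X V × Bool, (flush (σX c).1, (σX c).2).2 = !xIsA →
      (flush (σX c).1, (σX c).2) ∈ D := by
    intro c h2
    refine Or.inr (Or.inl ⟨h2, ?_⟩)
    show totalBuf (flush (σX c).1) ≤ 1
    have h0 : totalBuf (flush (σX c).1) = 0 := by
      simp [totalBuf, (hflush (σX c).1).2]
    omega
  -- validity of the flushed strategy in the restricted game
  have hvalid' : ∀ (h : List (Conf I S X V × Bool)) (c : Conf I S X V × Bool),
      c.2 = xIsA ∧ c ∈ D →
      (restrictGame G D).step c (flush (σX c).1, (σX c).2) := by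
    intro h c ⟨hc, hcD⟩
    have hstep : G.step c (σX c) := hvalid h c hc
    obtain ⟨hm, hflip2⟩ := hXstep c (σX c) hc hstep
    have hm' : Move P permX c.1 (flush (σX c).1) :=
      move_extend_after hX hm (hflush (σX c).1).1
    have hstep' : G.step c (flush (σX c).1, (σX c).2) := hXstepBack _ _ hc hflip2 hm'
    exact ⟨hstep', hcD, hsuccD c hflip2⟩
  refine ⟨hvalid', ?_⟩
  -- winning part
  intro ρ h0 hplay hcons
  have hGstep : ∀ i, G.step (ρ i) (ρ (i + 1)) ∧ ρ i ∈ D ∧ ρ (i + 1) ∈ D := hplay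
  have hDall : ∀ i, ρ i ∈ D := fun i => (hGstep i).2.1
  have hconsρ : ∀ i, (ρ i).2 = xIsA → ρ (i + 1) = (flush (σX (ρ i)).1, (σX (ρ i)).2) :=
    fun i hi => hcons i ⟨hi, hDall i⟩
  -- the shadow play following σX itself
  set ρ' : ℕ → Conf I S X V × Bool := fun i =>
    Nat.casesOn i (ρ 0) (fun j => if (ρ j).2 = xIsA then σX (ρ j) else ρ (j + 1)) with hρ'
  have hρ'0 : ρ' 0 = ρ 0 := rfl
  have hρ'succX : ∀ j, (ρ j).2 = xIsA → ρ' (j + 1) = σX (ρ j) := by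
    intro j hj; simp [hρ', hj]
  have hρ'succY : ∀ j, (ρ j).2 ≠ xIsA → ρ' (j + 1) = ρ (j + 1) := by
    intro j hj; simp [hρ', hj]
  have hown : ∀ i, (ρ' i).2 = (ρ i).2 := by
    intro i
    cases i with
    | zero => rfl
    | succ j =>
      by_cases hj : (ρ j).2 = xIsA
      · rw [hρ'succX j hj, hconsρ j hj]
      · rw [hρ'succY j hj]
  have hst : ∀ i, (ρ' i).1.st = (ρ i).1.st := by
    intro i
    cases i with
    | zero => rfl
    | succ j =>
      by_cases hj : (ρ j).2 = xIsA
      · rw [hρ'succX j hj, hconsρ j hj]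
        exact ((hflush (σX (ρ j)).1).1.st_eq').symm
      · rw [hρ'succY j hj]
  have heqX : ∀ i, (ρ i).2 = xIsA → ρ' i = ρ i := by
    intro i hi
    cases i with
    | zero => rfl
    | succ j =>
      have : (ρ (j + 1)).2 = !(ρ j).2 := hflip _ _ (hGstep j).1
      have hj : (ρ j).2 ≠ xIsA := by
        intro h; rw [h, hi] at this; simp at this
      exact hρ'succY j hj
  have hplay' : G.IsPlay ρ' := by
    intro i
    by_cases hi : (ρ i).2 = xIsA
    · rw [heqX i hi, hρ'succX i hi]
      exact hvalid [] _ hi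
    · rw [hρ'succY i hi]
      cases i with
      | zero => exact (hGstep 0).1
      | succ j =>
        have hflipj : (ρ (j + 1)).2 = !(ρ j).2 := hflip _ _ (hGstep j).1
        have hj : (ρ j).2 = xIsA := by
          rw [hflipj] at hi
          revert hi; cases (ρ j).2 <;> cases xIsA <;> decide
        have hrj : ρ (j + 1) = (flush (σX (ρ j)).1, (σX (ρ j)).2) := hconsρ j hj
        have hY2 : (ρ (j + 1)).2 = !xIsA := by
          rw [hflipj, hj]
        have hu : Upds (σX (ρ j)).1 (ρ (j + 1)).1 := by
          rw [hrj]; exact (hflush (σX (ρ j)).1).1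
        have habs := hYabsorb (σX (ρ j)).1 (ρ (j + 1)) (ρ (j + 2)) hY2 hu (hGstep (j + 1)).1
        have hpair : ρ' (j + 1) = ((σX (ρ j)).1, (ρ (j + 1)).2) := by
          rw [hρ'succX j hj]
          have : (σX (ρ j)).2 = (ρ (j + 1)).2 := by rw [hrj]
          exact Prod.ext rfl this
        rw [hpair]
        exact habs
  have hcons' : SGame.Consistent (ownOf xIsA) (fun _ c => σX c) ρ' := by
    intro i hi
    have hi' : (ρ i).2 = xIsA := by rw [← hown i]; exact hi
    rw [heqX i hi'] at hi ⊢
    exact hρ'succX i hi'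
  have hw := hwinplay ρ' (by rw [hρ'0, h0]) hplay' hcons'
  -- transfer finals between ρ' and ρ
  have hfin : ∀ i, G.final (ρ' i) ↔ G.final (ρ i) := by
    intro i
    show ((ρ' i).2 = true ∧ ∃ ι, (ρ' i).1.st ι ∈ SF) ↔
      ((ρ i).2 = true ∧ ∃ ι, (ρ i).1.st ι ∈ SF)
    rw [hown i, hst i]
  show winPlayOf (restrictGame G D) xIsA ρ
  cases xIsA with
  | true =>
    simp only [winPlayOf, if_true] at hw ⊢
    intro ⟨i, hfi, _⟩
    exact hw ⟨i, (hfin i).mpr hfi⟩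
  | false =>
    simp only [winPlayOf, if_false, Bool.false_eq_true] at hw ⊢
    obtain ⟨i, hfi⟩ := hw
    exact ⟨i, (hfin i).mp hfi, hDall i⟩

end TSOGames
end

section
/- Let G be a TSO game of group I (player X updates after her moves, player Y updates before her moves), let c_0 be a configuration, and let G' be the finite restricted game defined from G and c_0 (Y-configurations with at most one buffered message together with c_0, their G-successors as X-configurations, restricted transitions, restricted final set). If σ'_X is a winning strategy for player X from c_0 in G', then every extension σ_X of σ'_X to a strategy of G is a winning strategy for player X from c_0 in G. -/
namespace TSOGames

/-- Group I: if `σ'X` is a winning strategy for player X from `c0` in the restricted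
finite game `G'`, then every extension of `σ'X` to a strategy of `G` (a valid strategy of
`G` agreeing with `σ'X` on the X-configurations of `G'`) is winning for X from `c0` in `G`. -/
theorem statement5 {I S X V : Type} [DecidableEq I] [DecidableEq X] [Fintype I]
    (P : Program I S X V) (SF : Set S)
    (permX permY : Bool × Bool) (hX : permX.2 = true) (hY : permY.1 = true)
    (xIsA : Bool)
    (G : SGame (Conf I S X V × Bool))
    (hG : G = tsoGame P (if xIsA then permX else permY) (if xIsA then permY else permX) SF)
    (c0 : Conf I S X V × Bool)
    (D : Set (Conf I S X V × Bool))
    (hD : D = groupICX G xIsA c0 ∪ groupICY xIsA c0)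
    (G' : SGame (Conf I S X V × Bool)) (hG' : G' = restrictGame G D)
    (σ'X σX : Conf I S X V × Bool → Conf I S X V × Bool)
    (hwin' : G'.WinningStrat (fun c => c.2 = xIsA ∧ c ∈ D) (winPlayOf G' xIsA)
      (fun _ c => σ'X c) c0)
    (hext : ∀ c, c.2 = xIsA → c ∈ D → σX c = σ'X c)
    (hvalid : G.ValidStrat (ownOf xIsA) (fun _ c => σX c)) :
    G.WinningStrat (ownOf xIsA) (winPlayOf G xIsA) (fun _ c => σX c) c0 := by
  obtain ⟨hval', hplays'⟩ := hwin'
  refine ⟨hvalid, ?_⟩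
  intro ρ h0 hplay hcons
  -- parity of steps in G
  have hstepP : ∀ c c' : Conf I S X V × Bool, G.step c c' → c'.2 = !c.2 := by
    intro c c' h
    rw [hG] at h
    rcases h with ⟨h1, h2, -⟩ | ⟨h1, h2, -⟩ <;> simp [h1, h2]
  -- parity of groupICY
  have hCY : ∀ c ∈ groupICY xIsA c0, c.2 = !xIsA := by
    intro c hc
    rcases hc with ⟨h1, -⟩ | ⟨rfl, h2⟩
    · exact h1
    · exact h2
  -- parity of groupICX
  have hCX : ∀ c ∈ groupICX G xIsA c0, c.2 = xIsA := by
    intro c hc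
    rcases hc with ⟨d, hd, hstep⟩ | ⟨rfl, h2⟩
    · have := hstepP d c hstep
      rw [this, hCY d hd, Bool.not_not]
    · exact h2
  have hc0D : c0 ∈ D := by
    rw [hD]
    by_cases hx : c0.2 = xIsA
    · exact Or.inl (Or.inr ⟨rfl, hx⟩)
    · have : c0.2 = !xIsA := by
        cases h : c0.2 <;> cases xIsA <;> simp_all
      exact Or.inr (Or.inr ⟨rfl, this⟩)
  -- the play stays in D
  have hDmem : ∀ i, ρ i ∈ D := by
    intro i
    induction i with
    | zero => rw [h0]; exact hc0D
    | succ i ih =>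
      by_cases hx : (ρ i).2 = xIsA
      · have hstep' := hval' [] (ρ i) ⟨hx, ih⟩
        rw [hG'] at hstep'
        have hc : ρ (i + 1) = σ'X (ρ i) := by
          rw [hcons i hx]; exact hext _ hx ih
        rw [hc]
        exact hstep'.2.2
      · have hmem : ρ i ∈ groupICY xIsA c0 := by
          rw [hD] at ih
          rcases ih with h | h
          · exact absurd (hCX _ h) hx
          · exact h
        rw [hD]
        exact Or.inl (Or.inl ⟨ρ i, hmem, hplay i⟩)
  -- ρ is a play of G'
  have hplay' : G'.IsPlay ρ := by
    intro i
    rw [hG']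
    exact ⟨hplay i, hDmem i, hDmem (i + 1)⟩
  have hcons' : SGame.Consistent (fun c => c.2 = xIsA ∧ c ∈ D)
      (fun _ c => σ'X c) ρ := by
    intro i ⟨h1, h2⟩
    rw [hcons i h1]; exact hext _ h1 h2
  have hwin := hplays' ρ h0 hplay' hcons'
  -- transfer the winning condition
  have hB : G'.BWins ρ ↔ G.BWins ρ := by
    constructor
    · rintro ⟨i, hf⟩
      rw [hG'] at hf
      exact ⟨i, hf.1⟩
    · rintro ⟨i, hf⟩
      exact ⟨i, by rw [hG']; exact ⟨hf, hDmem i⟩⟩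
  unfold winPlayOf at hwin ⊢
  cases xIsA <;> simp_all

end TSOGames
end

section
/- Let P be a concurrent program under TSO semantics. For all TSO configurations c_1, c_2, c_3, every process ι, and every instruction instr: if c_1 →(instr_ι) c_2 and c_1 ≡ c_3 (c_1 and c_3 are view-equivalent), then there exists a TSO configuration c_4 such that c_3 →(instr_ι) c_4 and c_2 ≡ c_4. -/
namespace TSOGames

/-- The view of the processes on a TSO configuration: the global state, the value each
process reads from each variable, and whether each process can execute a memory fence
(i.e. whether its buffer is empty). -/
structure View (I S X V : Type*) where
  st : I → S
  val : I → X → V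
  fence : I → Bool

variable {I S X V : Type*}

/-- The view of a TSO configuration. -/
def view [DecidableEq X] (c : Conf I S X V) : View I S X V where
  st := c.st
  val := fun ι x => readVal c ι x
  fence := fun ι => (c.buf ι).isEmpty

end TSOGames
namespace TSOGames

/-- If `c1 →(instr_ι) c2` and `c1` is view-equivalent to `c3`, then there is a `c4`
with `c3 →(instr_ι) c4` and `c2` view-equivalent to `c4`. -/
theorem statement13 {I S X V : Type} [DecidableEq I] [DecidableEq X]
    (P : Program I S X V) (c1 c2 c3 : Conf I S X V) (ι : I) (instr : Instr X V)
    (h12 : InstrStep P ι instr c1 c2) (h13 : view c1 = view c3) :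
    ∃ c4 : Conf I S X V, InstrStep P ι instr c3 c4 ∧ view c2 = view c4 := by
  have hst : c1.st = c3.st := congrArg View.st h13
  have hval : ∀ κ x, readVal c1 κ x = readVal c3 κ x := fun κ x =>
    congrFun (congrFun (congrArg View.val h13) κ) x
  have hfen : ∀ κ, (c1.buf κ).isEmpty = (c3.buf κ).isEmpty := fun κ =>
    congrFun (congrArg View.fence h13) κ
  cases h12 with
  | read x v s' hi hd hr =>
    refine ⟨_, InstrStep.read c3 x v s' hi (by rw [← hst]; exact hd)
      (by rw [← hval]; exact hr), ?_⟩
    simp only [view, readVal, View.mk.injEq]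
    exact ⟨by rw [hst], funext fun κ => funext fun y => hval κ y, funext hfen⟩
  | write x v s' hi hd =>
    refine ⟨_, InstrStep.write c3 x v s' hi (by rw [← hst]; exact hd), ?_⟩
    simp only [view, readVal, View.mk.injEq]
    refine ⟨by rw [hst], funext fun κ => funext fun y => ?_, funext fun κ => ?_⟩
    · by_cases hκ : κ = ι
      · subst hκ
        simp only [Function.update_self, bufVal]
        by_cases hxy : x = y
        · simp [hxy]
        · simp only [hxy, if_false]
          exact hval κ y
      · simp only [Function.update_of_ne hκ]
        exact hval κ y
    · by_cases hκ : κ = ι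
      · subst hκ; simp
      · simp only [Function.update_of_ne hκ]; exact hfen κ
  | skip s' hi hd =>
    refine ⟨_, InstrStep.skip c3 s' hi (by rw [← hst]; exact hd), ?_⟩
    simp only [view, readVal, View.mk.injEq]
    exact ⟨by rw [hst], funext fun κ => funext fun y => hval κ y, funext hfen⟩
  | fence s' hi hd hb =>
    have hb3 : c3.buf ι = [] := by
      have := hfen ι
      rw [hb] at this
      simpa [List.isEmpty_iff] using this.symm
    refine ⟨_, InstrStep.fence c3 s' hi (by rw [← hst]; exact hd) hb3, ?_⟩
    simp only [view, readVal, View.mk.injEq]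
    exact ⟨by rw [hst], funext fun κ => funext fun y => hval κ y, funext hfen⟩

end TSOGames
end
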